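/- Let X be a group and A an infinite generating set for X. If the sphere S_A(h) = {x ∈ X : ℓ_A(x) = h} is finite for some positive integer h, then S_A(k) = ∅ for all k > h. -/

import Mathlib

noncomputable def wordLength {X : Type*} [Group X] (A : Set X) (x : X) : ℕ :=
  sInf {k | ∃ l : List X, l.length = k ∧ (∀ a ∈ l, a ∈ A ∪ A⁻¹) ∧ l.prod = x}

section
variable {X : Type*} [Group X] {A : Set X}

lemma rep_exists (hA : Subgroup.closure A = ⊤) (x : X) :
    ∃ l : List X, (∀ a ∈ l, a ∈ A ∪ A⁻¹) ∧ l.prod = x := by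
  have hx : x ∈ Submonoid.closure (A ∪ A⁻¹) := by
    rw [← Subgroup.closure_toSubmonoid, hA]; trivial
  exact Submonoid.exists_list_of_mem_closure hx

lemma wordLength_le {x : X} {l : List X} (hl : ∀ a ∈ l, a ∈ A ∪ A⁻¹) (hp : l.prod = x) :
    wordLength A x ≤ l.length :=
  Nat.sInf_le ⟨l, rfl, hl, hp⟩

lemma exists_geodesic (hA : Subgroup.closure A = ⊤) (x : X) :
    ∃ l : List X, l.length = wordLength A x ∧ (∀ a ∈ l, a ∈ A ∪ A⁻¹) ∧ l.prod = x := by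
  have : {k | ∃ l : List X, l.length = k ∧ (∀ a ∈ l, a ∈ A ∪ A⁻¹) ∧ l.prod = x}.Nonempty := by
    obtain ⟨l, hl, hp⟩ := rep_exists hA x
    exact ⟨l.length, l, rfl, hl, hp⟩
  exact Nat.sInf_mem this

lemma wordLength_mul_le (hA : Subgroup.closure A = ⊤) (x y : X) :
    wordLength A (x * y) ≤ wordLength A x + wordLength A y := by
  obtain ⟨l1, h1, hl1, hp1⟩ := exists_geodesic hA x
  obtain ⟨l2, h2, hl2, hp2⟩ := exists_geodesic hA y
  calc wordLength A (x * y) ≤ (l1 ++ l2).length := by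
        refine wordLength_le ?_ ?_
        · intro a ha; rcases List.mem_append.mp ha with h | h
          exacts [hl1 a h, hl2 a h]
        · rw [List.prod_append, hp1, hp2]
    _ = wordLength A x + wordLength A y := by simp [h1, h2]

lemma wordLength_letter_le {b : X} (hb : b ∈ A ∪ A⁻¹) : wordLength A b ≤ 1 :=
  wordLength_le (l := [b]) (by simpa using hb) (by simp)

lemma mem_union_inv_of_inv {b : X} (hb : b ∈ A ∪ A⁻¹) : b⁻¹ ∈ A ∪ A⁻¹ := by
  rcases hb with h | h
  · exact Or.inr (by simpa using h)
  · exact Or.inl (by simpa using Set.mem_inv.mp h)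

/-- splitting a geodesic -/
lemma geodesic_split (hA : Subgroup.closure A = ⊤) {l : List X} {x : X} (n : ℕ)
    (hl : ∀ a ∈ l, a ∈ A ∪ A⁻¹) (hp : l.prod = x) (hlen : l.length = wordLength A x) :
    wordLength A (l.take n).prod = (l.take n).length ∧
      wordLength A (l.drop n).prod = (l.drop n).length := by
  have h1 : wordLength A (l.take n).prod ≤ (l.take n).length :=
    wordLength_le (fun a ha => hl a (List.mem_of_mem_take ha)) rfl
  have h2 : wordLength A (l.drop n).prod ≤ (l.drop n).length :=
    wordLength_le (fun a ha => hl a (List.mem_of_mem_drop ha)) rfl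
  have h3 : x = (l.take n).prod * (l.drop n).prod := by
    rw [← List.prod_append, List.take_append_drop, hp]
  have h4 : wordLength A x ≤ wordLength A (l.take n).prod + wordLength A (l.drop n).prod := by
    rw [h3]; exact wordLength_mul_le hA _ _
  have h5 : (l.take n).length + (l.drop n).length = l.length := by
    rw [← List.length_append, List.take_append_drop]
  omega

/-- the sphere of radius `h+1` is finite if the sphere of radius `h ≥ 1` is -/
lemma sphere_succ_finite (hA : Subgroup.closure A = ⊤) (h : ℕ) (hh : 0 < h)
    (hfin : {x : X | wordLength A x = h}.Finite) :
    {x : X | wordLength A x = h + 1}.Finite := by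
  by_contra hcon
  have hS1 : {x : X | wordLength A x = h + 1}.Infinite := hcon
  -- choose geodesics
  set g : X → List X := fun x => (exists_geodesic hA x).choose with hg
  have hgspec : ∀ x : X, (g x).length = wordLength A x ∧
      (∀ a ∈ g x, a ∈ A ∪ A⁻¹) ∧ (g x).prod = x := fun x => (exists_geodesic hA x).choose_spec
  set φ : X → X := fun x => ((g x).take h).prod with hφ
  have hmaps : ∀ x ∈ {x : X | wordLength A x = h + 1}, φ x ∈ {x : X | wordLength A x = h} := by
    intro x hx
    obtain ⟨hlen, hmem, hprod⟩ := hgspec x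
    have := (geodesic_split hA h hmem hprod hlen).1
    have hl : ((g x).take h).length = h := by
      rw [List.length_take]; simp only [Set.mem_setOf_eq] at hx; omega
    simpa [φ, hl] using this
  -- find an infinite fiber
  have : ∃ p ∈ {x : X | wordLength A x = h},
      {x | x ∈ {x : X | wordLength A x = h + 1} ∧ φ x = p}.Infinite := by
    by_contra hall
    push_neg at hall
    have hsub : {x : X | wordLength A x = h + 1} ⊆
        ⋃ p ∈ {x : X | wordLength A x = h}, {x | x ∈ {x : X | wordLength A x = h + 1} ∧ φ x = p} := by
      intro x hx
      exact Set.mem_biUnion (hmaps x hx) ⟨hx, rfl⟩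
    exact hS1 ((hfin.biUnion fun p hp => hall p hp).subset hsub)
  obtain ⟨p, hp, hFinf⟩ := this
  set F := {x | x ∈ {x : X | wordLength A x = h + 1} ∧ φ x = p} with hF
  -- geodesic of p
  obtain ⟨hplen, hpmem, hpprod⟩ := hgspec p
  set u : X := ((g p).drop 1).prod with hu
  set c1 : X := ((g p).take 1).prod with hc1
  have hulen : wordLength A u = h - 1 := by
    have := (geodesic_split hA 1 hpmem hpprod hplen).2
    have hl : ((g p).drop 1).length = h - 1 := by
      rw [List.length_drop]; simp only [Set.mem_setOf_eq] at hp; omega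
    rw [hl] at this; rw [hu]; exact this
  have hc1le : wordLength A c1 ≤ 1 := by
    have : wordLength A c1 ≤ ((g p).take 1).length :=
      wordLength_le (fun a ha => hpmem a (List.mem_of_mem_take ha)) rfl
    have : ((g p).take 1).length ≤ 1 := by rw [List.length_take]; omega
    omega
  have hpsplit : p = c1 * u := by
    rw [hc1, hu, ← List.prod_append, List.take_append_drop, hpprod]
  -- for x in fiber, b = p⁻¹ x is a letter
  have hkey : ∀ x ∈ F, wordLength A (u * (p⁻¹ * x)) = h := by
    intro x hx
    obtain ⟨hx1, hx2⟩ := hx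
    simp only [Set.mem_setOf_eq] at hx1
    obtain ⟨hxlen, hxmem, hxprod⟩ := hgspec x
    -- the dropped part is a single letter
    have hdl : ((g x).drop h).length = 1 := by rw [List.length_drop]; omega
    obtain ⟨c, hc⟩ := List.length_eq_one_iff.mp hdl
    have hcmem : c ∈ A ∪ A⁻¹ := by
      apply hxmem
      exact List.mem_of_mem_drop (by rw [hc]; simp)
    have hxdecomp : x = p * c := by
      have : x = ((g x).take h).prod * ((g x).drop h).prod := by
        rw [← List.prod_append, List.take_append_drop, hxprod]
      rw [this, hc]; simp [← hx2, φ]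
    have hb : p⁻¹ * x = c := by rw [hxdecomp]; group
    rw [hb]
    have hle : wordLength A (u * c) ≤ h := by
      have h1 := wordLength_mul_le hA u c
      have h2 := wordLength_letter_le hcmem
      omega
    have hge : h ≤ wordLength A (u * c) := by
      have hx' : x = c1 * (u * c) := by rw [hxdecomp, hpsplit]; group
      have h1 : wordLength A x ≤ wordLength A c1 + wordLength A (u * c) := by
        rw [hx']; exact wordLength_mul_le hA _ _
      omega
    omega
  -- injective image into finite sphere
  have himg : (F.image fun x => u * (p⁻¹ * x)).Infinite := by
    apply hFinf.image
    intro a _ b _ hab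
    exact mul_left_cancel (mul_left_cancel hab)
  have hsub : (F.image fun x => u * (p⁻¹ * x)) ⊆ {x : X | wordLength A x = h} := by
    rintro y ⟨x, hx, rfl⟩
    exact hkey x hx
  exact himg (hfin.subset hsub)

end

/-- If `A` is an infinite generating set of `X` and the sphere `S_A(h)` is finite for
some positive integer `h`, then `S_A(k) = ∅` for all `k > h`. -/
theorem sphere_empty_of_sphere_finite {X : Type*} [Group X] (A : Set X)
    (hA : Subgroup.closure A = ⊤) (hAinf : A.Infinite)
    (h : ℕ) (hh : 0 < h) (hfin : {x : X | wordLength A x = h}.Finite) :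
    ∀ k : ℕ, h < k → {x : X | wordLength A x = k} = ∅ := by
  have hfin1 : {x : X | wordLength A x = h + 1}.Finite := sphere_succ_finite hA h hh hfin
  -- Step: S(h+1) = ∅
  have hempty : {x : X | wordLength A x = h + 1} = ∅ := by
    by_contra hne
    obtain ⟨p, hp⟩ := Set.nonempty_iff_ne_empty.mpr hne
    simp only [Set.mem_setOf_eq] at hp
    -- S(h+2) is infinite
    have hTinf : (A ∪ A⁻¹).Infinite := hAinf.mono Set.subset_union_left
    have hbounds : ∀ b ∈ A ∪ A⁻¹, h ≤ wordLength A (p * b) ∧ wordLength A (p * b) ≤ h + 2 := by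
      intro b hb
      constructor
      · have h1 : wordLength A p ≤ wordLength A (p * b) + wordLength A b⁻¹ := by
          have : p = (p * b) * b⁻¹ := by group
          calc wordLength A p = wordLength A ((p * b) * b⁻¹) := by rw [← this]
            _ ≤ _ := wordLength_mul_le hA _ _
        have h2 := wordLength_letter_le (mem_union_inv_of_inv hb)
        omega
      · have h1 := wordLength_mul_le hA p b
        have h2 := wordLength_letter_le hb
        omega
    have hf0 : {b | b ∈ A ∪ A⁻¹ ∧ wordLength A (p * b) = h}.Finite := by
      have : {b | b ∈ A ∪ A⁻¹ ∧ wordLength A (p * b) = h} ⊆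
          (fun b => p * b) ⁻¹' {x : X | wordLength A x = h} := fun b hb => hb.2
      exact (hfin.preimage (mul_right_injective p).injOn).subset this
    have hf1 : {b | b ∈ A ∪ A⁻¹ ∧ wordLength A (p * b) = h + 1}.Finite := by
      have : {b | b ∈ A ∪ A⁻¹ ∧ wordLength A (p * b) = h + 1} ⊆
          (fun b => p * b) ⁻¹' {x : X | wordLength A x = h + 1} := fun b hb => hb.2
      exact (hfin1.preimage (mul_right_injective p).injOn).subset this
    have hf2 : {b | b ∈ A ∪ A⁻¹ ∧ wordLength A (p * b) = h + 2}.Infinite := by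
      intro hf2fin
      apply hTinf
      have : A ∪ A⁻¹ ⊆ {b | b ∈ A ∪ A⁻¹ ∧ wordLength A (p * b) = h}
          ∪ {b | b ∈ A ∪ A⁻¹ ∧ wordLength A (p * b) = h + 1}
          ∪ {b | b ∈ A ∪ A⁻¹ ∧ wordLength A (p * b) = h + 2} := by
        intro b hb
        obtain ⟨h1, h2⟩ := hbounds b hb
        have hcase : wordLength A (p * b) = h ∨ wordLength A (p * b) = h + 1 ∨
            wordLength A (p * b) = h + 2 := by omega
        rcases hcase with hw | hw | hw
        · exact Or.inl (Or.inl ⟨hb, hw⟩)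
        · exact Or.inl (Or.inr ⟨hb, hw⟩)
        · exact Or.inr ⟨hb, hw⟩
      exact ((hf0.union hf1).union hf2fin).subset this
    have hS2inf : {x : X | wordLength A x = h + 2}.Infinite := by
      have himg := hf2.image (f := fun b => p * b)
        (Set.injOn_of_injective (mul_right_injective p))
      apply himg.mono
      rintro y ⟨b, hb, rfl⟩
      exact hb.2
    -- S(h+2) is finite
    have hS2fin : {x : X | wordLength A x = h + 2}.Finite := by
      have hprodfin : (({x : X | wordLength A x = h + 1} ×ˢ
          ({x : X | wordLength A x = h} ×ˢ {x : X | wordLength A x = h + 1})).image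
          (fun qms => qms.1 * qms.2.1⁻¹ * qms.2.2)).Finite :=
        (hfin1.prod (hfin.prod hfin1)).image _
      apply hprodfin.subset
      intro z hz
      simp only [Set.mem_setOf_eq] at hz
      obtain ⟨l, hlen, hmem, hprod⟩ := exists_geodesic hA z
      rw [hz] at hlen
      -- q = take (h+1), s = drop 1, m = (drop 1).take h
      set q : X := (l.take (h + 1)).prod with hq
      set s : X := (l.drop 1).prod with hs
      set m : X := ((l.drop 1).take h).prod with hm
      have hqmem : wordLength A q = h + 1 := by
        have := (geodesic_split hA (h + 1) hmem hprod (by omega)).1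
        have hl : (l.take (h + 1)).length = h + 1 := by rw [List.length_take]; omega
        rw [hl] at this; rw [hq]; exact this
      have hsmem : wordLength A s = h + 1 := by
        have := (geodesic_split hA 1 hmem hprod (by omega)).2
        have hl : (l.drop 1).length = h + 1 := by rw [List.length_drop]; omega
        rw [hl] at this; rw [hs]; exact this
      have hmmem : wordLength A m = h := by
        have hdmem : ∀ a ∈ l.drop 1, a ∈ A ∪ A⁻¹ :=
          fun a ha => hmem a (List.mem_of_mem_drop ha)
        have hdlen : (l.drop 1).length = wordLength A s := by
          rw [hsmem, List.length_drop]; omega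
        have := (geodesic_split hA h hdmem rfl hdlen).1
        have hl : ((l.drop 1).take h).length = h := by
          rw [List.length_take, List.length_drop]; omega
        rw [hl] at this; rw [hm]; exact this
      refine ⟨⟨q, m, s⟩, ⟨hqmem, hmmem, hsmem⟩, ?_⟩
      -- z = q * m⁻¹ * s
      have h1 : q = (l.take 1).prod * m := by
        rw [hq, hm]
        have : l.take (h + 1) = l.take 1 ++ (l.drop 1).take h := by
          rw [add_comm]; exact List.take_add
        rw [this, List.prod_append]
      have h2 : s = m * ((l.drop 1).drop h).prod := by
        rw [hs, hm, ← List.prod_append, List.take_append_drop]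
      have h3 : z = (l.take 1).prod * s := by
        rw [hs, ← hprod, ← List.prod_append, List.take_append_drop]
      simp only []
      rw [h1, h3, h2]
      group
    exact hS2inf hS2fin
  -- propagate emptiness upward
  intro k hk
  ext x
  simp only [Set.mem_setOf_eq, Set.mem_empty_iff_false, iff_false]
  intro hx
  obtain ⟨l, hlen, hmem, hprod⟩ := exists_geodesic hA x
  rw [hx] at hlen
  have : wordLength A (l.take (h + 1)).prod = h + 1 := by
    have := (geodesic_split hA (h + 1) hmem hprod (by omega)).1
    have hl : (l.take (h + 1)).length = h + 1 := by rw [List.length_take]; omega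
    rw [this, hl]
  have : (l.take (h + 1)).prod ∈ ({} : Set X) := by
    rw [← hempty]; exact this
  simp at this
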